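/- Let H be a 2-dimensional NIG random vector with parameters α > 0, δ > 0, β, μ ∈ ℝ², and Δ a symmetric positive-definite 2×2 matrix, and let R ∈ ℝ² satisfy α² − ⟨β+R, Δ(β+R)⟩ ≥ 0. Then for all u ∈ ℝ², Re(log M_H(R+iu)) ≤ ⟨μ,R⟩ + δ√(α² − ⟨β,Δβ⟩) − δ √(λ_min) |u|, where λ_min is the smallest eigenvalue of Δ and log M_H(w) = ⟨w,μ⟩ + δ(√(α² − ⟨β,Δβ⟩) − √(α² − ⟨β+w, Δ(β+w)⟩)) with the complex bilinear product ⟨u,v⟩ = Σᵢ uᵢvᵢ and the principal square root. -/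

import Mathlib

open Complex Matrix

private lemma sqrt_re_le_cpow_half_re (z : ℂ) (hz : 0 ≤ z.re) :
    Real.sqrt z.re ≤ (z ^ (1/2 : ℂ)).re := by
  rcases eq_or_ne z 0 with rfl | h0
  · simp
  have hw : (z ^ (1/2:ℂ)) * (z ^ (1/2:ℂ)) = z := by
    rw [← Complex.cpow_add _ _ h0]; norm_num
  have hre : 0 ≤ (z ^ (1/2:ℂ)).re := by
    have h12re : (1/2 : ℂ).re = 1/2 := by norm_num
    have h12im : (1/2 : ℂ).im = 0 := by norm_num
    rw [Complex.cpow_def_of_ne_zero h0, Complex.exp_re]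
    apply mul_nonneg (Real.exp_nonneg _)
    apply Real.cos_nonneg_of_mem_Icc
    constructor
    · simp only [Complex.mul_im, Complex.log_im, h12re, h12im]
      nlinarith [Complex.neg_pi_lt_arg z, Real.pi_pos]
    · simp only [Complex.mul_im, Complex.log_im, h12re, h12im]
      nlinarith [Complex.arg_le_pi z, Real.pi_pos]
  have h2 : z.re ≤ (z ^ (1/2:ℂ)).re ^ 2 := by
    have := congrArg Complex.re hw
    rw [Complex.mul_re] at this
    nlinarith [sq_nonneg ((z ^ (1/2:ℂ)).im)]
  calc Real.sqrt z.re ≤ Real.sqrt ((z ^ (1/2:ℂ)).re ^ 2) := Real.sqrt_le_sqrt h2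
    _ = (z ^ (1/2:ℂ)).re := by rw [Real.sqrt_sq hre]

private lemma eig_quadratic_le {n : Type*} [Fintype n] [DecidableEq n] [Nonempty n]
    (A : Matrix n n ℝ) (hA : A.IsHermitian) (u : n → ℝ) :
    (⨅ i, hA.eigenvalues i) * (∑ i, u i ^ 2) ≤ ∑ i, u i * A.mulVec u i := by
  classical
  set W : Matrix n n ℝ := (hA.eigenvectorUnitary : Matrix n n ℝ) with hW
  have hWmem : W ∈ Matrix.unitaryGroup n ℝ := hA.eigenvectorUnitary.2
  have hWW : W * star W = 1 := (Matrix.mem_unitaryGroup_iff).mp hWmem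
  have hst : star W = Wᵀ := Matrix.conjTranspose_eq_transpose_of_trivial W
  set v : n → ℝ := star W *ᵥ u with hv
  have hvv : v ⬝ᵥ v = u ⬝ᵥ u := by
    rw [hv, Matrix.dotProduct_mulVec, Matrix.vecMul_mulVec]
    rw [hst, Matrix.transpose_transpose, ← hst, hWW]
    simp
  have key : ∑ i, u i * A.mulVec u i = ∑ i, hA.eigenvalues i * v i ^ 2 := by
    have h1 : ∑ i, u i * A.mulVec u i = u ⬝ᵥ A *ᵥ u := rfl
    rw [h1]
    conv_lhs => rw [hA.spectral_theorem, Unitary.conjStarAlgAut_apply]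
    rw [← Matrix.mulVec_mulVec, ← Matrix.mulVec_mulVec, Matrix.dotProduct_mulVec]
    have h2 : u ᵥ* W = v := by rw [hv, hst, Matrix.mulVec_transpose]
    rw [h2]
    simp only [dotProduct, Matrix.mulVec_diagonal, Function.comp_apply,
      RCLike.ofReal_real_eq_id, id_eq]
    exact Finset.sum_congr rfl fun i _ => by ring
  rw [key]
  have hbdd : BddBelow (Set.range hA.eigenvalues) := Set.Finite.bddBelow (Set.finite_range _)
  have hsum : (⨅ i, hA.eigenvalues i) * (∑ i, u i ^ 2) = ∑ i, (⨅ j, hA.eigenvalues j) * v i ^ 2 := by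
    rw [← Finset.mul_sum]
    congr 1
    have h3 : ∑ i, v i ^ 2 = v ⬝ᵥ v := by simp [dotProduct, sq]
    rw [h3, hvv]
    simp [dotProduct, sq]
  rw [hsum]
  exact Finset.sum_le_sum fun i _ =>
    mul_le_mul_of_nonneg_right (ciInf_le hbdd i) (sq_nonneg _)

/-- Exponential decay bound for the 2d NIG moment generating function: for a 2d NIG law
with parameters `α > 0`, `δ > 0`, `β, μ ∈ ℝ²`, `Δ` symmetric positive definite, and a
dampening vector `R` with `α² - ⟨β+R, Δ(β+R)⟩ ≥ 0`, for all `u ∈ ℝ²`,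
`Re(log M_H(R+iu)) ≤ ⟨μ,R⟩ + δ√(α² - ⟨β,Δβ⟩) - δ √(λ_min) |u|`, where `λ_min` is the
smallest eigenvalue of `Δ`, the bilinear product `⟨u,v⟩ = Σᵢ uᵢvᵢ` is extended to `ℂ²`
without conjugation, and `log M_H(w) = ⟨w,μ⟩ + δ(√(α² - ⟨β,Δβ⟩) - √(α² - ⟨β+w,Δ(β+w)⟩))`
with the principal complex square root. -/
theorem nig2d_mgf_decay (α δ : ℝ) (hα : 0 < α) (hδ : 0 < δ)
    (β μ R : Fin 2 → ℝ) (Δ : Matrix (Fin 2) (Fin 2) ℝ)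
    (hΔsymm : Δ.IsHermitian) (hΔpos : Δ.PosDef)
    (hR : 0 ≤ α ^ 2 - ∑ i, (β i + R i) * Δ.mulVec (β + R) i)
    (u : Fin 2 → ℝ) :
    ((∑ i, ((R i : ℂ) + Complex.I * (u i : ℂ)) * (μ i : ℂ)) +
        (δ : ℂ) * (((Real.sqrt (α ^ 2 - ∑ i, β i * Δ.mulVec β i) : ℝ) : ℂ) -
          ((α ^ 2 : ℂ) - ∑ i, ((β i : ℂ) + (R i : ℂ) + Complex.I * (u i : ℂ)) *
              (Δ.map (Complex.ofReal)).mulVec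
                (fun j => (β j : ℂ) + (R j : ℂ) + Complex.I * (u j : ℂ)) i) ^
            (1 / 2 : ℂ))).re ≤
      (∑ i, μ i * R i) + δ * Real.sqrt (α ^ 2 - ∑ i, β i * Δ.mulVec β i) -
        δ * Real.sqrt (⨅ i, hΔsymm.eigenvalues i) * Real.sqrt (∑ i, u i ^ 2) := by
  set lam : ℝ := ⨅ i, hΔsymm.eigenvalues i with hlam
  set z : ℂ := (α ^ 2 : ℂ) - ∑ i, ((β i : ℂ) + (R i : ℂ) + Complex.I * (u i : ℂ)) *
      (Δ.map (Complex.ofReal)).mulVec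
        (fun j => (β j : ℂ) + (R j : ℂ) + Complex.I * (u j : ℂ)) i with hz
  have hlam_pos : 0 < lam := by
    rw [hlam]
    obtain ⟨i0, hi0⟩ := exists_eq_ciInf_of_finite (f := hΔsymm.eigenvalues)
    rw [← hi0]
    exact hΔpos.eigenvalues_pos i0
  have hzre : z.re = (α ^ 2 - ∑ i, (β i + R i) * Δ.mulVec (β + R) i) +
      ∑ i, u i * Δ.mulVec u i := by
    rw [hz]
    simp only [Fin.sum_univ_two, Matrix.mulVec, dotProduct, Matrix.map_apply,
      Pi.add_apply, Complex.sub_re, Complex.add_re, Complex.add_im, Complex.mul_re,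
      Complex.mul_im, Complex.I_re, Complex.I_im, Complex.ofReal_re, Complex.ofReal_im,
      ← Complex.ofReal_pow, Complex.ofReal_re]
    ring
  have hquad : lam * (∑ i, u i ^ 2) ≤ ∑ i, u i * Δ.mulVec u i :=
    eig_quadratic_le Δ hΔsymm u
  have hzre_nonneg : lam * (∑ i, u i ^ 2) ≤ z.re := by
    rw [hzre]; linarith
  have hz0 : 0 ≤ z.re :=
    le_trans (mul_nonneg hlam_pos.le (Finset.sum_nonneg fun i _ => sq_nonneg _)) hzre_nonneg
  have hkey : Real.sqrt lam * Real.sqrt (∑ i, u i ^ 2) ≤ (z ^ (1/2 : ℂ)).re := by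
    calc Real.sqrt lam * Real.sqrt (∑ i, u i ^ 2)
        = Real.sqrt (lam * ∑ i, u i ^ 2) := (Real.sqrt_mul hlam_pos.le _).symm
      _ ≤ Real.sqrt z.re := Real.sqrt_le_sqrt hzre_nonneg
      _ ≤ (z ^ (1/2 : ℂ)).re := sqrt_re_le_cpow_half_re z hz0
  have hlhs : ((∑ i, ((R i : ℂ) + Complex.I * (u i : ℂ)) * (μ i : ℂ)) +
      (δ : ℂ) * (((Real.sqrt (α ^ 2 - ∑ i, β i * Δ.mulVec β i) : ℝ) : ℂ) -
        z ^ (1 / 2 : ℂ))).re =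
      (∑ i, μ i * R i) + δ * (Real.sqrt (α ^ 2 - ∑ i, β i * Δ.mulVec β i) -
        (z ^ (1/2 : ℂ)).re) := by
    simp only [Fin.sum_univ_two, Complex.add_re, Complex.mul_re, Complex.mul_im,
      Complex.sub_re, Complex.add_im, Complex.I_re, Complex.I_im, Complex.ofReal_re,
      Complex.ofReal_im]
    ring
  rw [hlhs]
  nlinarith [hkey, hδ.le, mul_le_mul_of_nonneg_left hkey hδ.le]
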